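/- arXiv:math-ph/0404070 — 5 statements merged into one kernel-verified Lean document; each statement's English description precedes it below -/
import Mathlib

section
/- Let M and 𝒜 be bounded self-adjoint operators on a Hilbert space ℋ with M ≥ δ > 0, and let T : ℋ → H₀ be a bounded operator with T T† = I_{H₀}. For ζ in the upper half-plane (Im ζ > 0), the operator ζM − 𝒜 is invertible, and the admittance 𝔄(ζ) = i T (ζM − 𝒜)^{-1} T† satisfies Re 𝔄(ζ) = (Im ζ) · T (ζM − 𝒜)^{-1} M [T (ζM − 𝒜)^{-1}]† ≥ 0, i.e. 𝔄(ζ) + 𝔄(ζ)† is a non-negative operator. -/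
open ContinuousLinearMap
open scoped InnerProductSpace

section Aux

variable {ℋ : Type*} [NormedAddCommGroup ℋ] [InnerProductSpace ℂ ℋ] [CompleteSpace ℋ]

lemma inner_self_real_of_selfAdjoint (M : ℋ →L[ℂ] ℋ) (hM : IsSelfAdjoint M) (V : ℋ) :
    ⟪V, M V⟫_ℂ = ((⟪V, M V⟫_ℂ).re : ℂ) := by
  have h : (starRingEnd ℂ) ⟪V, M V⟫_ℂ = ⟪V, M V⟫_ℂ := by
    rw [inner_conj_symm]
    conv_lhs => rw [← hM.adjoint_eq]
    rw [adjoint_inner_left]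
  rw [Complex.conj_eq_iff_re.mp h]

lemma key_lower_bound (M 𝒜 : ℋ →L[ℂ] ℋ) (hM : IsSelfAdjoint M) (h𝒜 : IsSelfAdjoint 𝒜)
    (δ : ℝ) (hMδ : ∀ V : ℋ, δ * ‖V‖ ^ 2 ≤ (⟪V, M V⟫_ℂ).re)
    (z : ℂ) (hz : 0 < z.im) (V : ℋ) :
    ‖V‖ ^ 2 * (δ * z.im) ≤ ‖⟪(z • M - 𝒜) V, V⟫_ℂ‖ := by
  have him : (⟪V, (z • M - 𝒜) V⟫_ℂ).im = z.im * (⟪V, M V⟫_ℂ).re := by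
    simp only [sub_apply, smul_apply, inner_sub_right, inner_smul_right]
    rw [inner_self_real_of_selfAdjoint M hM V, inner_self_real_of_selfAdjoint 𝒜 h𝒜 V]
    simp [Complex.mul_im]
  have h1 : z.im * (δ * ‖V‖ ^ 2) ≤ (⟪V, (z • M - 𝒜) V⟫_ℂ).im := by
    rw [him]
    exact mul_le_mul_of_nonneg_left (hMδ V) hz.le
  have h2 : (⟪V, (z • M - 𝒜) V⟫_ℂ).im ≤ ‖⟪V, (z • M - 𝒜) V⟫_ℂ‖ :=
    (le_abs_self _).trans (Complex.abs_im_le_norm _)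
  have h3 : ‖⟪V, (z • M - 𝒜) V⟫_ℂ‖ = ‖⟪(z • M - 𝒜) V, V⟫_ℂ‖ := by
    rw [← inner_conj_symm]
    exact RCLike.norm_conj _
  nlinarith [h1, h2, h3]

end Aux

set_option maxHeartbeats 1000000 in
/-- Let `M`, `𝒜` be bounded self-adjoint on `ℋ` with `M ≥ δ > 0`, and
`T : ℋ → H₀` with `T T† = I`. For `Im ζ > 0` the operator `ζM − 𝒜` is invertible and the
admittance `𝔄(ζ) = i T (ζM − 𝒜)⁻¹ T†` satisfies
`Re 𝔄(ζ) = (Im ζ)·T (ζM − 𝒜)⁻¹ M [T (ζM − 𝒜)⁻¹]† ≥ 0`. -/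
theorem admittance_of_truncated_conservative_is_dissipative
    {ℋ H₀ : Type*}
    [NormedAddCommGroup ℋ] [InnerProductSpace ℂ ℋ] [CompleteSpace ℋ]
    [NormedAddCommGroup H₀] [InnerProductSpace ℂ H₀] [CompleteSpace H₀]
    (M 𝒜 : ℋ →L[ℂ] ℋ) (hM : IsSelfAdjoint M) (h𝒜 : IsSelfAdjoint 𝒜)
    (δ : ℝ) (hδ : 0 < δ) (hMδ : ∀ V : ℋ, δ * ‖V‖ ^ 2 ≤ (⟪V, M V⟫_ℂ).re)
    (T : ℋ →L[ℂ] H₀) (hT : T ∘L adjoint T = 1)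
    (ζ : ℂ) (hζ : 0 < ζ.im) :
    ∃ R : ℋ →L[ℂ] ℋ,
      (ζ • M - 𝒜) ∘L R = 1 ∧ R ∘L (ζ • M - 𝒜) = 1 ∧
      (let 𝔄 : H₀ →L[ℂ] H₀ := Complex.I • (T ∘L R ∘L adjoint T);
        (1 / 2 : ℝ) • (𝔄 + adjoint 𝔄)
            = ζ.im • ((T ∘L R) ∘L M ∘L adjoint (T ∘L R)) ∧
        (𝔄 + adjoint 𝔄).IsPositive) := by
  set A : ℋ →L[ℂ] ℋ := ζ • M - 𝒜 with hA
  -- invertibility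
  have hc : (0 : ℝ) < δ * ζ.im := mul_pos hδ hζ
  have hunit : IsUnit A := by
    apply isUnit_of_forall_le_norm_inner_map A (c := ⟨δ * ζ.im, hc.le⟩)
    · exact_mod_cast hc
    · intro x
      exact_mod_cast key_lower_bound M 𝒜 hM h𝒜 δ hMδ ζ hζ x
  obtain ⟨u, hu⟩ := hunit
  set R : ℋ →L[ℂ] ℋ := (↑u⁻¹ : ℋ →L[ℂ] ℋ) with hR
  have h1 : A ∘L R = 1 := by rw [hR, ← hu]; exact u.mul_inv
  have h2 : R ∘L A = 1 := by rw [hR, ← hu]; exact u.inv_mul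
  clear_value R
  clear hu hR
  have hone : adjoint (1 : ℋ →L[ℂ] ℋ) = 1 := by
    rw [← star_eq_adjoint, star_one]
  have hadj2 : adjoint A ∘L adjoint R = 1 := by
    rw [← adjoint_comp, h2, hone]
  have hAadj : adjoint A = (starRingEnd ℂ ζ) • M - 𝒜 := by
    rw [← star_eq_adjoint, hA, star_sub, star_smul, hM.star_eq, h𝒜.star_eq]
    rfl
  set c : ℂ := (starRingEnd ℂ) ζ - ζ with hcdef
  have hdiff : adjoint A - A = c • M := by
    rw [hAadj, hA, hcdef, sub_smul]
    abel
  have hkey : R - adjoint R = c • ((R ∘L M) ∘L adjoint R) := by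
    calc R - adjoint R
        = (R ∘L (adjoint A ∘L adjoint R)) - ((R ∘L A) ∘L adjoint R) := by
          rw [hadj2, h2]; ext x; simp
      _ = (R ∘L (adjoint A ∘L adjoint R)) - (R ∘L (A ∘L adjoint R)) := by
          rw [comp_assoc]
      _ = R ∘L ((adjoint A - A) ∘L adjoint R) := by
          rw [← comp_sub, ← sub_comp]
      _ = R ∘L ((c • M) ∘L adjoint R) := by rw [hdiff]
      _ = c • ((R ∘L M) ∘L adjoint R) := by
          rw [smul_comp, comp_smul, comp_assoc]
  refine ⟨R, h1, h2, ?_⟩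
  dsimp only
  set 𝔄 : H₀ →L[ℂ] H₀ := Complex.I • (T ∘L R ∘L adjoint T) with h𝔄
  set E : H₀ →L[ℂ] H₀ := (T ∘L R) ∘L M ∘L adjoint (T ∘L R) with hE
  have hAd : adjoint 𝔄 = (-Complex.I) • (T ∘L (adjoint R ∘L adjoint T)) := by
    rw [h𝔄, ← star_eq_adjoint, star_smul, star_eq_adjoint, adjoint_comp, adjoint_comp,
      adjoint_adjoint, RCLike.star_def, Complex.conj_I, comp_assoc]
  have hIc : Complex.I * c = ((2 * ζ.im : ℝ) : ℂ) := by
    rw [hcdef, Complex.ext_iff]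
    constructor <;> simp <;> ring
  have hassoc : T ∘L (((R ∘L M) ∘L adjoint R) ∘L adjoint T) = E := by
    rw [hE, adjoint_comp]; ext x; rfl
  have heq : 𝔄 + adjoint 𝔄 = (2 * ζ.im : ℝ) • E := by
    calc 𝔄 + adjoint 𝔄
        = Complex.I • (T ∘L ((R - adjoint R) ∘L adjoint T)) := by
          rw [hAd, h𝔄, neg_smul, ← sub_eq_add_neg, ← smul_sub, ← comp_sub, ← sub_comp]
      _ = Complex.I • (c • (T ∘L (((R ∘L M) ∘L adjoint R) ∘L adjoint T))) := by
          rw [hkey, smul_comp, comp_smul]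
      _ = ((2 * ζ.im : ℝ) : ℂ) • E := by rw [smul_smul, hIc, hassoc]
      _ = (2 * ζ.im : ℝ) • E := (RCLike.real_smul_eq_coe_smul (K := ℂ) (2 * ζ.im) E).symm
  constructor
  · rw [heq, smul_smul]
    congr 1
    ring
  · have hMpos : M.IsPositive := by
      refine ⟨isSelfAdjoint_iff_isSymmetric.mp hM, fun x => ?_⟩
      rw [reApplyInnerSelf, inner_re_symm]
      exact le_trans (by positivity) (hMδ x)
    have hEpos : E.IsPositive := hMpos.conj_adjoint (T ∘L R)
    rw [heq, RCLike.real_smul_eq_coe_smul (K := ℂ) (2 * ζ.im)]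
    refine ⟨?_, fun x => ?_⟩
    · refine isSelfAdjoint_iff_isSymmetric.mp ?_
      show star _ = _
      rw [star_smul, hEpos.isSelfAdjoint.star_eq, RCLike.star_def, RCLike.conj_ofReal]
    rw [reApplyInnerSelf, smul_apply, inner_smul_left, RCLike.conj_ofReal,
      RCLike.re_ofReal_mul]
    exact mul_nonneg (by positivity) (hEpos.2 x)
end

section
/- Let H₀, H₁ be Hilbert spaces, m, A bounded self-adjoint on H₀ with m ≥ δ > 0, Ω₁ bounded self-adjoint on H₁, Γ : H₁ → H₀ bounded. For ζ with Im ζ > 0, both ζ − Ω₁ and ζm − A − Γ(ζ − Ω₁)^{-1}Γ† are invertible, and the admittance of the block system equals 𝔄(ζ) = i (ζ m − A − Γ (ζ I_{H₁} − Ω₁)^{-1} Γ†)^{-1}, i.e. T(ζM − 𝒜)^{-1}T† = (ζ m − A − Γ (ζ − Ω₁)^{-1} Γ†)^{-1} where M = m ⊕ I, 𝒜 = [[A,Γ],[Γ†,Ω₁]], and T is the projection of H₀ ⊕ H₁ onto the first component. -/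
open ContinuousLinearMap
open scoped InnerProductSpace

/-- The block operator `[[A, B],[C, D]]` on the Hilbert direct sum `H₀ ⊕ H₁`. -/
noncomputable def blockOp {H₀ H₁ : Type*}
    [NormedAddCommGroup H₀] [InnerProductSpace ℂ H₀]
    [NormedAddCommGroup H₁] [InnerProductSpace ℂ H₁]
    (A : H₀ →L[ℂ] H₀) (B : H₁ →L[ℂ] H₀) (C : H₀ →L[ℂ] H₁) (D : H₁ →L[ℂ] H₁) :
    WithLp 2 (H₀ × H₁) →L[ℂ] WithLp 2 (H₀ × H₁) :=
  ((WithLp.prodContinuousLinearEquiv 2 ℂ H₀ H₁).symm : H₀ × H₁ →L[ℂ] WithLp 2 (H₀ × H₁)) ∘L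
    ((((A ∘L fst ℂ H₀ H₁) + (B ∘L snd ℂ H₀ H₁)).prod
        ((C ∘L fst ℂ H₀ H₁) + (D ∘L snd ℂ H₀ H₁)))) ∘L
    ((WithLp.prodContinuousLinearEquiv 2 ℂ H₀ H₁) : WithLp 2 (H₀ × H₁) →L[ℂ] H₀ × H₁)

/-- The isometric truncation `T : H₀ ⊕ H₁ → H₀`, `T(v,w) = v`. -/
noncomputable def truncFst (H₀ H₁ : Type*)
    [NormedAddCommGroup H₀] [InnerProductSpace ℂ H₀]
    [NormedAddCommGroup H₁] [InnerProductSpace ℂ H₁] :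
    WithLp 2 (H₀ × H₁) →L[ℂ] H₀ :=
  (fst ℂ H₀ H₁) ∘L
    ((WithLp.prodContinuousLinearEquiv 2 ℂ H₀ H₁) : WithLp 2 (H₀ × H₁) →L[ℂ] H₀ × H₁)

set_option linter.unusedSectionVars false

section Coercive

variable {H : Type*} [NormedAddCommGroup H] [InnerProductSpace ℂ H] [CompleteSpace H]

lemma lower_bound_of_im (B : H →L[ℂ] H) (c : ℝ) (h : ∀ v, c * ‖v‖ ^ 2 ≤ |(⟪v, B v⟫_ℂ).im|) :
    ∀ v, c * ‖v‖ ≤ ‖B v‖ := by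
  intro v
  rcases eq_or_ne v 0 with rfl | hv
  · simp
  have h1 : |(⟪v, B v⟫_ℂ).im| ≤ ‖v‖ * ‖B v‖ := by
    calc |(⟪v, B v⟫_ℂ).im| ≤ ‖(⟪v, B v⟫_ℂ)‖ := Complex.abs_im_le_norm _
    _ ≤ ‖v‖ * ‖B v‖ := norm_inner_le_norm _ _
  have h2 := (h v).trans h1
  have hv' : 0 < ‖v‖ := norm_pos_iff.mpr hv
  nlinarith [norm_nonneg (B v)]

lemma invertible_of_im_coercive (B : H →L[ℂ] H) (c : ℝ) (hc : 0 < c)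
    (h : ∀ v, c * ‖v‖ ^ 2 ≤ (⟪v, B v⟫_ℂ).im) :
    ∃ R : H →L[ℂ] H, B ∘L R = 1 ∧ R ∘L B = 1 := by
  have hlb : ∀ v, c * ‖v‖ ≤ ‖B v‖ :=
    lower_bound_of_im B c fun v => (h v).trans (le_abs_self _)
  have hadj : ∀ v, c * ‖v‖ ≤ ‖adjoint B v‖ := by
    refine lower_bound_of_im (adjoint B) c fun v => ?_
    have e : ⟪v, adjoint B v⟫_ℂ = starRingEnd ℂ ⟪v, B v⟫_ℂ := by
      rw [← inner_conj_symm, adjoint_inner_left]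
    rw [e]
    simp only [Complex.conj_im, abs_neg]
    exact (h v).trans (le_abs_self _)
  have hker_adj : ∀ x, adjoint B x = 0 → x = 0 := by
    intro x hx
    have h1 := hadj x
    rw [hx, norm_zero] at h1
    have : ‖x‖ ≤ 0 := by nlinarith
    simpa using le_antisymm this (norm_nonneg x)
  have hker : LinearMap.ker (B : H →ₗ[ℂ] H) = ⊥ := by
    rw [Submodule.eq_bot_iff]
    intro x hx
    have hx' : B x = 0 := hx
    have h1 := hlb x
    rw [hx', norm_zero] at h1
    have : ‖x‖ ≤ 0 := by nlinarith
    simpa using le_antisymm this (norm_nonneg x)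
  have hanti : AntilipschitzWith (c.toNNReal)⁻¹ B :=
    B.antilipschitz_of_bound (K := (c.toNNReal)⁻¹) fun x => by
      rw [NNReal.coe_inv, Real.coe_toNNReal _ hc.le, inv_mul_eq_div, le_div_iff₀ hc, mul_comm]
      exact hlb x
  have hclosed : IsClosed ((LinearMap.range (B : H →ₗ[ℂ] H) : Submodule ℂ H) : Set H) := by
    simpa [LinearMap.coe_range] using hanti.isClosed_range B.uniformContinuous
  have horth : (LinearMap.range (B : H →ₗ[ℂ] H))ᗮ = ⊥ := by
    rw [Submodule.eq_bot_iff]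
    intro x hx
    refine hker_adj x ?_
    have : ∀ v : H, ⟪v, adjoint B x⟫_ℂ = 0 := fun v => by
      rw [adjoint_inner_right]
      exact hx (B v) ⟨v, rfl⟩
    exact inner_self_eq_zero.mp (this (adjoint B x))
  have hrange : LinearMap.range (B : H →ₗ[ℂ] H) = ⊤ := by
    have := Submodule.orthogonal_orthogonal_eq_closure (K := LinearMap.range (B : H →ₗ[ℂ] H))
    rw [horth, Submodule.bot_orthogonal_eq_top,
      hclosed.submodule_topologicalClosure_eq] at this
    exact this.symm
  refine ⟨(ContinuousLinearEquiv.ofBijective B hker hrange).symm.toContinuousLinearMap, ?_, ?_⟩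
  · ext x
    simpa using (ContinuousLinearEquiv.ofBijective B hker hrange).apply_symm_apply x
  · ext x
    simpa using (ContinuousLinearEquiv.ofBijective B hker hrange).symm_apply_apply x

lemma im_inner_selfAdjoint (S : H →L[ℂ] H) (hS : IsSelfAdjoint S) (v : H) :
    (⟪v, S v⟫_ℂ).im = 0 := by
  have h1 : starRingEnd ℂ ⟪v, S v⟫_ℂ = ⟪v, S v⟫_ℂ := by
    rw [inner_conj_symm]
    exact (isSelfAdjoint_iff_isSymmetric.mp hS) v v
  exact Complex.conj_eq_iff_im.mp h1

lemma im_inner_shift (Ω : H →L[ℂ] H) (hΩ : IsSelfAdjoint Ω) (ζ : ℂ) (v : H) :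
    (⟪v, (ζ • (1 : H →L[ℂ] H) - Ω) v⟫_ℂ).im = ζ.im * ‖v‖ ^ 2 := by
  simp only [ContinuousLinearMap.sub_apply, ContinuousLinearMap.smul_apply,
    ContinuousLinearMap.one_apply]
  rw [inner_sub_right, inner_smul_right, inner_self_eq_norm_sq_to_K]
  simp [Complex.sub_im, Complex.mul_im, im_inner_selfAdjoint Ω hΩ v, ← Complex.ofReal_pow]

lemma im_inner_resolvent (Ω : H →L[ℂ] H) (hΩ : IsSelfAdjoint Ω) (ζ : ℂ) (R₁ : H →L[ℂ] H)
    (h : (ζ • (1 : H →L[ℂ] H) - Ω) ∘L R₁ = 1) (w : H) :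
    (⟪w, R₁ w⟫_ℂ).im = -(ζ.im * ‖R₁ w‖ ^ 2) := by
  have hw : (ζ • (1 : H →L[ℂ] H) - Ω) (R₁ w) = w := by
    have := DFunLike.congr_fun h w
    simpa using this
  have h2 : (⟪R₁ w, w⟫_ℂ).im = ζ.im * ‖R₁ w‖ ^ 2 := by
    conv_lhs => rw [show (⟪R₁ w, w⟫_ℂ) = ⟪R₁ w, (ζ • (1 : H →L[ℂ] H) - Ω) (R₁ w)⟫_ℂ from by
      rw [hw]]
    exact im_inner_shift Ω hΩ ζ (R₁ w)
  rw [← inner_conj_symm, Complex.conj_im, h2]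

end Coercive

section Block

variable {H₀ H₁ : Type*}
    [NormedAddCommGroup H₀] [InnerProductSpace ℂ H₀] [CompleteSpace H₀]
    [NormedAddCommGroup H₁] [InnerProductSpace ℂ H₁] [CompleteSpace H₁]

lemma blockOp_apply_fst (A : H₀ →L[ℂ] H₀) (B : H₁ →L[ℂ] H₀) (C : H₀ →L[ℂ] H₁) (D : H₁ →L[ℂ] H₁)
    (x : WithLp 2 (H₀ × H₁)) : (blockOp A B C D x).fst = A x.fst + B x.snd := rfl

lemma blockOp_apply_snd (A : H₀ →L[ℂ] H₀) (B : H₁ →L[ℂ] H₀) (C : H₀ →L[ℂ] H₁) (D : H₁ →L[ℂ] H₁)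
    (x : WithLp 2 (H₀ × H₁)) : (blockOp A B C D x).snd = C x.fst + D x.snd := rfl

lemma withLp_ext {x y : WithLp 2 (H₀ × H₁)} (h1 : x.fst = y.fst) (h2 : x.snd = y.snd) : x = y :=
  (WithLp.prodContinuousLinearEquiv 2 ℂ H₀ H₁).injective (Prod.ext h1 h2)

lemma blockOp_comp (A : H₀ →L[ℂ] H₀) (B : H₁ →L[ℂ] H₀) (C : H₀ →L[ℂ] H₁) (D : H₁ →L[ℂ] H₁)
    (A' : H₀ →L[ℂ] H₀) (B' : H₁ →L[ℂ] H₀) (C' : H₀ →L[ℂ] H₁) (D' : H₁ →L[ℂ] H₁) :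
    blockOp A B C D ∘L blockOp A' B' C' D' =
      blockOp (A ∘L A' + B ∘L C') (A ∘L B' + B ∘L D')
        (C ∘L A' + D ∘L C') (C ∘L B' + D ∘L D') := by
  ext x
  refine withLp_ext ?_ ?_ <;>
    simp only [coe_comp', Function.comp_apply, blockOp_apply_fst, blockOp_apply_snd,
      ContinuousLinearMap.add_apply, map_add] <;> abel

lemma blockOp_one : blockOp (1 : H₀ →L[ℂ] H₀) 0 0 (1 : H₁ →L[ℂ] H₁) = 1 := by
  ext x
  exact withLp_ext (by simp [blockOp_apply_fst]) (by simp [blockOp_apply_snd])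

lemma blockOp_shift (m A : H₀ →L[ℂ] H₀) (Γ : H₁ →L[ℂ] H₀) (Γ' : H₀ →L[ℂ] H₁)
    (Ω : H₁ →L[ℂ] H₁) (ζ : ℂ) :
    ζ • blockOp m 0 0 (1 : H₁ →L[ℂ] H₁) - blockOp A Γ Γ' Ω =
      blockOp (ζ • m - A) (-Γ) (-Γ') (ζ • (1 : H₁ →L[ℂ] H₁) - Ω) := by
  ext x
  refine withLp_ext ?_ ?_ <;>
    simp only [ContinuousLinearMap.sub_apply, ContinuousLinearMap.smul_apply,
      blockOp_apply_fst, blockOp_apply_snd, WithLp.smul_fst, WithLp.smul_snd,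
      WithLp.sub_fst, WithLp.sub_snd, zero_apply, neg_apply, add_zero, zero_add, smul_add,
      ContinuousLinearMap.one_apply] <;> module

lemma adjoint_truncFst :
    adjoint (truncFst H₀ H₁) =
      ((WithLp.prodContinuousLinearEquiv 2 ℂ H₀ H₁).symm :
          H₀ × H₁ →L[ℂ] WithLp 2 (H₀ × H₁)) ∘L inl ℂ H₀ H₁ := by
  symm
  rw [eq_adjoint_iff]
  intro x y
  simp [WithLp.prod_inner_apply, truncFst]

lemma trunc_conj (A : H₀ →L[ℂ] H₀) (B : H₁ →L[ℂ] H₀) (C : H₀ →L[ℂ] H₁) (D : H₁ →L[ℂ] H₁) :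
    truncFst H₀ H₁ ∘L blockOp A B C D ∘L adjoint (truncFst H₀ H₁) = A := by
  rw [adjoint_truncFst]
  ext v
  simp only [coe_comp', Function.comp_apply, inl_apply]
  rw [show ∀ x : WithLp 2 (H₀ × H₁), truncFst H₀ H₁ x = x.fst from fun _ => rfl,
    blockOp_apply_fst]
  simp

lemma block_inverse (a : H₀ →L[ℂ] H₀) (Γ : H₁ →L[ℂ] H₀) (Γ' : H₀ →L[ℂ] H₁) (d : H₁ →L[ℂ] H₁)
    (R₁ : H₁ →L[ℂ] H₁) (R₂ : H₀ →L[ℂ] H₀)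
    (hd₁ : d ∘L R₁ = 1) (hd₂ : R₁ ∘L d = 1)
    (hS₁ : (a - Γ ∘L R₁ ∘L Γ') ∘L R₂ = 1) (hS₂ : R₂ ∘L (a - Γ ∘L R₁ ∘L Γ') = 1) :
    blockOp a (-Γ) (-Γ') d ∘L
        blockOp R₂ (R₂ ∘L Γ ∘L R₁) (R₁ ∘L Γ' ∘L R₂) (R₁ + R₁ ∘L Γ' ∘L R₂ ∘L Γ ∘L R₁) = 1 ∧
      blockOp R₂ (R₂ ∘L Γ ∘L R₁) (R₁ ∘L Γ' ∘L R₂) (R₁ + R₁ ∘L Γ' ∘L R₂ ∘L Γ ∘L R₁) ∘L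
        blockOp a (-Γ) (-Γ') d = 1 := by
  have hd₁x : ∀ u, d (R₁ u) = u := fun u => by simpa using DFunLike.congr_fun hd₁ u
  have hd₂x : ∀ u, R₁ (d u) = u := fun u => by simpa using DFunLike.congr_fun hd₂ u
  have hS₁x : ∀ u, a (R₂ u) = u + Γ (R₁ (Γ' (R₂ u))) := fun u => by
    have h := DFunLike.congr_fun hS₁ u
    simp only [coe_comp', Function.comp_apply, ContinuousLinearMap.sub_apply,
      ContinuousLinearMap.one_apply] at h
    exact eq_add_of_sub_eq h
  have hS₂x : ∀ u, R₂ (a u) = u + R₂ (Γ (R₁ (Γ' u))) := fun u => by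
    have h := DFunLike.congr_fun hS₂ u
    simp only [coe_comp', Function.comp_apply, ContinuousLinearMap.sub_apply,
      ContinuousLinearMap.one_apply, map_sub] at h
    exact eq_add_of_sub_eq h
  constructor
  · rw [blockOp_comp]
    have e11 : a ∘L R₂ + (-Γ) ∘L (R₁ ∘L Γ' ∘L R₂) = 1 := by
      ext v
      simp only [ContinuousLinearMap.add_apply, coe_comp', Function.comp_apply, neg_apply,
        ContinuousLinearMap.one_apply]
      rw [hS₁x v]; abel
    have e12 : a ∘L (R₂ ∘L Γ ∘L R₁) + (-Γ) ∘L (R₁ + R₁ ∘L Γ' ∘L R₂ ∘L Γ ∘L R₁) = 0 := by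
      ext v
      simp only [ContinuousLinearMap.add_apply, coe_comp', Function.comp_apply, neg_apply,
        ContinuousLinearMap.zero_apply, map_add]
      rw [hS₁x (Γ (R₁ v))]; abel
    have e21 : (-Γ') ∘L R₂ + d ∘L (R₁ ∘L Γ' ∘L R₂) = 0 := by
      ext v
      simp only [ContinuousLinearMap.add_apply, coe_comp', Function.comp_apply, neg_apply,
        ContinuousLinearMap.zero_apply]
      rw [hd₁x (Γ' (R₂ v))]; abel
    have e22 : (-Γ') ∘L (R₂ ∘L Γ ∘L R₁) + d ∘L (R₁ + R₁ ∘L Γ' ∘L R₂ ∘L Γ ∘L R₁) = 1 := by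
      ext v
      simp only [ContinuousLinearMap.add_apply, coe_comp', Function.comp_apply, neg_apply,
        ContinuousLinearMap.one_apply, map_add]
      rw [hd₁x v, hd₁x (Γ' (R₂ (Γ (R₁ v))))]; abel
    rw [e11, e12, e21, e22, blockOp_one]
  · rw [blockOp_comp]
    have f11 : R₂ ∘L a + (R₂ ∘L Γ ∘L R₁) ∘L (-Γ') = 1 := by
      ext v
      simp only [ContinuousLinearMap.add_apply, coe_comp', Function.comp_apply, neg_apply,
        ContinuousLinearMap.one_apply, map_neg]
      rw [hS₂x v]; abel
    have f12 : R₂ ∘L (-Γ) + (R₂ ∘L Γ ∘L R₁) ∘L d = 0 := by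
      ext v
      simp only [ContinuousLinearMap.add_apply, coe_comp', Function.comp_apply, neg_apply,
        ContinuousLinearMap.zero_apply, map_neg]
      rw [hd₂x v]; abel
    have f21 : (R₁ ∘L Γ' ∘L R₂) ∘L a + (R₁ + R₁ ∘L Γ' ∘L R₂ ∘L Γ ∘L R₁) ∘L (-Γ') = 0 := by
      ext v
      simp only [ContinuousLinearMap.add_apply, coe_comp', Function.comp_apply, neg_apply,
        ContinuousLinearMap.zero_apply, map_neg]
      rw [hS₂x v]
      simp only [map_add]; abel
    have f22 : (R₁ ∘L Γ' ∘L R₂) ∘L (-Γ) + (R₁ + R₁ ∘L Γ' ∘L R₂ ∘L Γ ∘L R₁) ∘L d = 1 := by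
      ext v
      simp only [ContinuousLinearMap.add_apply, coe_comp', Function.comp_apply, neg_apply,
        ContinuousLinearMap.one_apply, map_neg]
      rw [hd₂x v]; abel
    rw [f11, f12, f21, f22, blockOp_one]

end Block

/-- For `Im ζ > 0`, `ζ − Ω₁` and the Schur complement
`ζm − A − Γ(ζ − Ω₁)⁻¹Γ†` are invertible, and the `(1,1)` block of the resolvent of the
block system satisfies `T(ζM − 𝒜)⁻¹T† = (ζm − A − Γ(ζ − Ω₁)⁻¹Γ†)⁻¹`. -/
theorem admittance_schur_complement
    {H₀ H₁ : Type*}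
    [NormedAddCommGroup H₀] [InnerProductSpace ℂ H₀] [CompleteSpace H₀]
    [NormedAddCommGroup H₁] [InnerProductSpace ℂ H₁] [CompleteSpace H₁]
    (m A : H₀ →L[ℂ] H₀) (hm : IsSelfAdjoint m) (hA : IsSelfAdjoint A)
    (δ : ℝ) (hδ : 0 < δ) (hmδ : ∀ v : H₀, δ * ‖v‖ ^ 2 ≤ (⟪v, m v⟫_ℂ).re)
    (Ω₁ : H₁ →L[ℂ] H₁) (hΩ : IsSelfAdjoint Ω₁) (Γ : H₁ →L[ℂ] H₀)
    (ζ : ℂ) (hζ : 0 < ζ.im) :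
    ∃ (R₁ : H₁ →L[ℂ] H₁) (R₂ : H₀ →L[ℂ] H₀) (R : WithLp 2 (H₀ × H₁) →L[ℂ] WithLp 2 (H₀ × H₁)),
      (ζ • (1 : H₁ →L[ℂ] H₁) - Ω₁) ∘L R₁ = 1 ∧ R₁ ∘L (ζ • (1 : H₁ →L[ℂ] H₁) - Ω₁) = 1 ∧
      (ζ • m - A - Γ ∘L R₁ ∘L adjoint Γ) ∘L R₂ = 1 ∧
      R₂ ∘L (ζ • m - A - Γ ∘L R₁ ∘L adjoint Γ) = 1 ∧
      (ζ • blockOp m 0 0 (1 : H₁ →L[ℂ] H₁) - blockOp A Γ (adjoint Γ) Ω₁) ∘L R = 1 ∧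
      R ∘L (ζ • blockOp m 0 0 (1 : H₁ →L[ℂ] H₁) - blockOp A Γ (adjoint Γ) Ω₁) = 1 ∧
      truncFst H₀ H₁ ∘L R ∘L adjoint (truncFst H₀ H₁) = R₂ := by
  obtain ⟨R₁, hd₁, hd₂⟩ :=
    invertible_of_im_coercive (ζ • (1 : H₁ →L[ℂ] H₁) - Ω₁) ζ.im hζ
      (fun v => le_of_eq (im_inner_shift Ω₁ hΩ ζ v).symm)
  have hcoer : ∀ v, (ζ.im * δ) * ‖v‖ ^ 2 ≤
      (⟪v, (ζ • m - A - Γ ∘L R₁ ∘L adjoint Γ) v⟫_ℂ).im := by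
    intro v
    have expand : ⟪v, (ζ • m - A - Γ ∘L R₁ ∘L adjoint Γ) v⟫_ℂ
        = ζ * ⟪v, m v⟫_ℂ - ⟪v, A v⟫_ℂ - ⟪adjoint Γ v, R₁ (adjoint Γ v)⟫_ℂ := by
      simp only [ContinuousLinearMap.sub_apply, ContinuousLinearMap.smul_apply, coe_comp',
        Function.comp_apply]
      rw [inner_sub_right, inner_sub_right, inner_smul_right, ← adjoint_inner_left Γ]
    rw [expand]
    simp only [Complex.sub_im, Complex.mul_im]
    rw [im_inner_selfAdjoint m hm v, im_inner_selfAdjoint A hA v,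
      im_inner_resolvent Ω₁ hΩ ζ R₁ hd₁ (adjoint Γ v)]
    have h1 := hmδ v
    nlinarith [sq_nonneg ‖R₁ (adjoint Γ v)‖]
  obtain ⟨R₂, hS₁, hS₂⟩ :=
    invertible_of_im_coercive (ζ • m - A - Γ ∘L R₁ ∘L adjoint Γ) (ζ.im * δ)
      (by positivity) hcoer
  obtain ⟨hB₁, hB₂⟩ :=
    block_inverse (ζ • m - A) Γ (adjoint Γ) (ζ • (1 : H₁ →L[ℂ] H₁) - Ω₁) R₁ R₂
      hd₁ hd₂ hS₁ hS₂
  refine ⟨R₁, R₂,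
    blockOp R₂ (R₂ ∘L Γ ∘L R₁) (R₁ ∘L adjoint Γ ∘L R₂)
      (R₁ + R₁ ∘L adjoint Γ ∘L R₂ ∘L Γ ∘L R₁),
    hd₁, hd₂, hS₁, hS₂, ?_, ?_, ?_⟩
  · rw [blockOp_shift]
    exact hB₁
  · rw [blockOp_shift]
    exact hB₂
  · exact trunc_conj _ _ _ _
end

section
/- Let Γ : H₁ → H₀ and Ω₁ bounded self-adjoint on H₁, and set G(ζ) = Γ(Ω₁ − ζ)^{-1}Γ† for Im ζ > 0. Then ker G(ζ) = ker G(ζ)† = ker Γ† for every ζ with Im ζ > 0. -/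
open ContinuousLinearMap
open scoped InnerProductSpace

lemma aux_inner_zero {H₁ : Type*}
    [NormedAddCommGroup H₁] [InnerProductSpace ℂ H₁] [CompleteSpace H₁]
    (Ω₁ : H₁ →L[ℂ] H₁) (hΩ : IsSelfAdjoint Ω₁) (z : ℂ) (hz : z.im ≠ 0)
    (S : H₁ →L[ℂ] H₁)
    (h1 : (Ω₁ - z • (1 : H₁ →L[ℂ] H₁)) ∘L S = 1)
    (u : H₁) (hu : ⟪u, S u⟫_ℂ = 0) : u = 0 := by
  set w := S u with hw
  have huw : (Ω₁ - z • (1 : H₁ →L[ℂ] H₁)) w = u := by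
    have := congrArg (fun T : H₁ →L[ℂ] H₁ => T u) h1
    simpa using this
  have hreal : (⟪Ω₁ w, w⟫_ℂ).im = 0 := by
    have h := hΩ.isSymmetric w w
    have hc : starRingEnd ℂ ⟪Ω₁ w, w⟫_ℂ = ⟪Ω₁ w, w⟫_ℂ := by
      rw [inner_conj_symm]; exact h.symm
    exact Complex.conj_eq_iff_im.mp hc
  have hexp : ⟪u, w⟫_ℂ = ⟪Ω₁ w, w⟫_ℂ - (starRingEnd ℂ z) * (‖w‖ : ℂ)^2 := by
    rw [← huw]
    simp [inner_sub_left, inner_smul_left, inner_self_eq_norm_sq_to_K]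
    ring
  have him : (⟪u, w⟫_ℂ).im = z.im * ‖w‖^2 := by
    rw [hexp, ← Complex.ofReal_pow]
    simp only [Complex.sub_im, Complex.mul_im, hreal, Complex.ofReal_re,
      Complex.ofReal_im, Complex.conj_re, Complex.conj_im]
    ring
  have hw0 : w = 0 := by
    rw [hu] at him
    have : ‖w‖^2 = 0 := by
      rcases mul_eq_zero.mp him.symm with h | h
      · exact absurd h hz
      · exact_mod_cast h
    simpa using (pow_eq_zero_iff (two_ne_zero)).mp this |> norm_eq_zero.mp
  rw [← huw, hw0, map_zero]

lemma aux_ker {H₀ H₁ : Type*}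
    [NormedAddCommGroup H₀] [InnerProductSpace ℂ H₀] [CompleteSpace H₀]
    [NormedAddCommGroup H₁] [InnerProductSpace ℂ H₁] [CompleteSpace H₁]
    (Ω₁ : H₁ →L[ℂ] H₁) (hΩ : IsSelfAdjoint Ω₁) (Γ : H₁ →L[ℂ] H₀)
    (z : ℂ) (hz : z.im ≠ 0) (S : H₁ →L[ℂ] H₁)
    (h1 : (Ω₁ - z • (1 : H₁ →L[ℂ] H₁)) ∘L S = 1) :
    LinearMap.ker (Γ ∘L S ∘L adjoint Γ : H₀ →ₗ[ℂ] H₀) = LinearMap.ker (adjoint Γ : H₀ →ₗ[ℂ] H₁) := by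
  ext v
  simp only [LinearMap.mem_ker, ContinuousLinearMap.coe_coe, comp_apply]
  constructor
  · intro hv
    have hinner : ⟪adjoint Γ v, S (adjoint Γ v)⟫_ℂ = 0 := by
      rw [adjoint_inner_left, hv, inner_zero_right]
    exact aux_inner_zero Ω₁ hΩ z hz S h1 _ hinner
  · intro hv
    rw [hv]; simp

/-- For `G(ζ) = Γ(Ω₁ − ζ)⁻¹Γ†` with `Ω₁` bounded self-adjoint and
`Im ζ > 0`, one has `ker G(ζ) = ker G(ζ)† = ker Γ†`. -/
theorem kernel_of_herglotz_function_eq_kernel_adjoint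
    {H₀ H₁ : Type*}
    [NormedAddCommGroup H₀] [InnerProductSpace ℂ H₀] [CompleteSpace H₀]
    [NormedAddCommGroup H₁] [InnerProductSpace ℂ H₁] [CompleteSpace H₁]
    (Ω₁ : H₁ →L[ℂ] H₁) (hΩ : IsSelfAdjoint Ω₁) (Γ : H₁ →L[ℂ] H₀)
    (ζ : ℂ) (hζ : 0 < ζ.im)
    (R : H₁ →L[ℂ] H₁)
    (hR1 : (Ω₁ - ζ • (1 : H₁ →L[ℂ] H₁)) ∘L R = 1)
    (hR2 : R ∘L (Ω₁ - ζ • (1 : H₁ →L[ℂ] H₁)) = 1) :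
    LinearMap.ker (Γ ∘L R ∘L adjoint Γ : H₀ →ₗ[ℂ] H₀) = LinearMap.ker (adjoint Γ : H₀ →ₗ[ℂ] H₁) ∧
    LinearMap.ker (adjoint (Γ ∘L R ∘L adjoint Γ) : H₀ →ₗ[ℂ] H₀) = LinearMap.ker (adjoint Γ : H₀ →ₗ[ℂ] H₁) := by
  have hadj : adjoint (Γ ∘L R ∘L adjoint Γ) = Γ ∘L adjoint R ∘L adjoint Γ := by
    simp [adjoint_comp, adjoint_adjoint, comp_assoc]
  have hstar : adjoint (Ω₁ - ζ • (1 : H₁ →L[ℂ] H₁))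
      = Ω₁ - (starRingEnd ℂ ζ) • (1 : H₁ →L[ℂ] H₁) := by
    rw [← star_eq_adjoint]
    simp [star_sub, star_smul, hΩ.star_eq]
  have h1' : (Ω₁ - (starRingEnd ℂ ζ) • (1 : H₁ →L[ℂ] H₁)) ∘L adjoint R = 1 := by
    have := congrArg adjoint hR2
    rw [adjoint_comp, hstar] at this
    rwa [show adjoint (1 : H₁ →L[ℂ] H₁) = 1 by rw [← star_eq_adjoint, star_one]] at this
  refine ⟨aux_ker Ω₁ hΩ Γ ζ (ne_of_gt hζ) R hR1, ?_⟩
  rw [hadj]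
  exact aux_ker Ω₁ hΩ Γ (starRingEnd ℂ ζ) (by simp; linarith) (adjoint R) h1'
end

section
/- Let α_∞ ≥ 0 be a bounded operator on H₀, H₁ = L²(ℝ, H₀), Ω₁ multiplication by the independent variable (self-adjoint, unbounded), and S : H₁ → H₀ the bounded operator Sψ = (1/√π) ∫ (x + i)^{-1} √α_∞ ψ(x) dx. Then S e^{-itΩ₁} S† = e^{-|t|} α_∞ for all t ∈ ℝ, where S† v = (1/√π)(x − i)^{-1}√α_∞ v. -/
section auxScalar
open MeasureTheory Real Complex Set
open scoped FourierTransform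

lemma exp_int {c : ℂ} (hc : 0 < c.re) :
    ∫ x in Ioi (0:ℝ), Complex.exp (-(c*x)) = c⁻¹ := by
  have hint : IntegrableOn (fun x : ℝ => Complex.exp (-(c*x))) (Ioi 0) := by
    apply (integrable_norm_iff ?_).mp
    · simpa [Complex.norm_exp, neg_mul] using
        ((exp_neg_integrableOn_Ioi 0 hc).congr_fun (fun x _ => by
          simp [Complex.norm_exp, neg_mul, mul_comm]) measurableSet_Ioi).integrable
    · exact (Complex.continuous_exp.comp (by fun_prop)).aestronglyMeasurable
  refine tendsto_nhds_unique
    (intervalIntegral_tendsto_integral_Ioi 0 hint Filter.tendsto_id) ?_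
  have h : ∀ b : ℝ, ∫ x in (0:ℝ)..b, Complex.exp (-(c*x)) =
      (Complex.exp (-c * b) - 1) / (-c) := by
    intro b
    simpa using integral_exp_mul_complex (a := 0) (b := b) (c := -c)
      (by simpa using fun h => (ne_of_gt hc) (by rw [h]; simp))
  simp_rw [h]
  have : Filter.Tendsto (fun b : ℝ => Complex.exp (-c * b)) Filter.atTop (nhds 0) := by
    rw [tendsto_zero_iff_norm_tendsto_zero]
    simp only [Complex.norm_exp]
    simp only [neg_mul, neg_re, Complex.mul_re, Complex.ofReal_re, Complex.ofReal_im]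
    refine Real.tendsto_exp_atBot.comp ?_
    simp only [mul_zero, sub_zero]
    have h2 : Filter.Tendsto (fun b : ℝ => c.re * b) Filter.atTop Filter.atTop :=
      Filter.Tendsto.const_mul_atTop hc Filter.tendsto_id
    have := Filter.tendsto_neg_atBot_iff.mpr h2
    refine this.congr' (Filter.Eventually.of_forall fun b => by ring_nf)
  have := (this.sub_const 1).div_const (-c)
  simpa using this

lemma integrable_exp_neg_abs' : Integrable (fun x : ℝ => Real.exp (-|x|)) := by
  refine (integrable_inv_one_add_sq.const_mul 2).mono' (Real.continuous_exp.comp _root_.continuous_abs.neg).aestronglyMeasurable ?_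
  refine Filter.Eventually.of_forall fun x => ?_
  rw [Real.norm_eq_abs, _root_.abs_of_nonneg (Real.exp_nonneg _), Real.exp_neg]
  rw [inv_le_comm₀ (Real.exp_pos _) (by positivity)]
  have he : ((2:ℝ) * (1 + x ^ 2)⁻¹)⁻¹ = (1 + x^2) / 2 := by
    rw [mul_inv, inv_inv]; ring
  rw [he]
  have := Real.quadratic_le_exp_of_nonneg (abs_nonneg x)
  nlinarith [_root_.sq_abs x, abs_nonneg x]

lemma four_exp_abs (ξ : ℝ) :
    𝓕 (fun x : ℝ => (Real.exp (-|x|) : ℂ)) ξ = ((2 / (1 + (2*π*ξ)^2) : ℝ) : ℂ) := by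
  rw [Real.fourier_real_eq_integral_exp_smul]
  have hint : Integrable (fun v : ℝ =>
      Complex.exp (↑(-2 * π * v * ξ) * Complex.I) • (Real.exp (-|v|) : ℂ)) := by
    have hm : AEStronglyMeasurable (fun v : ℝ =>
        Complex.exp (↑(-2 * π * v * ξ) * Complex.I) • (Real.exp (-|v|) : ℂ)) volume := by
      refine AEStronglyMeasurable.smul (f := fun v : ℝ => Complex.exp (↑(-2 * π * v * ξ) * Complex.I))
        (g := fun v : ℝ => (Real.exp (-|v|) : ℂ)) ?_ ?_
      · exact (Complex.continuous_exp.comp (by fun_prop)).aestronglyMeasurable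
      · exact (Complex.continuous_ofReal.comp
          (Real.continuous_exp.comp _root_.continuous_abs.neg)).aestronglyMeasurable
    apply (integrable_norm_iff hm).mp
    simpa [Complex.norm_exp] using integrable_exp_neg_abs'
  rw [← intervalIntegral.integral_Iic_add_Ioi (b := 0) hint.integrableOn hint.integrableOn]
  have hIoi : ∫ v in Ioi (0:ℝ),
      Complex.exp (↑(-2 * π * v * ξ) * Complex.I) • (Real.exp (-|v|) : ℂ)
      = (1 + (2*π*ξ)*Complex.I)⁻¹ := by
    rw [← exp_int (c := 1 + (2*π*ξ)*Complex.I) (by simp)]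
    apply setIntegral_congr_fun measurableSet_Ioi
    intro v hv
    dsimp only
    rw [abs_of_pos hv, smul_eq_mul, Complex.ofReal_exp, ← Complex.exp_add]
    congr 1
    push_cast
    ring
  have hIic : ∫ v in Iic (0:ℝ),
      Complex.exp (↑(-2 * π * v * ξ) * Complex.I) • (Real.exp (-|v|) : ℂ)
      = (1 - (2*π*ξ)*Complex.I)⁻¹ := by
    have := integral_comp_neg_Iic (0:ℝ) (fun v : ℝ =>
      Complex.exp (↑(-2 * π * (-v) * ξ) * Complex.I) • (Real.exp (-|(-v)|) : ℂ))
    simp only [neg_neg, neg_zero] at this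
    rw [this]
    rw [← exp_int (c := 1 - (2*π*ξ)*Complex.I) (by simp)]
    apply setIntegral_congr_fun measurableSet_Ioi
    intro v hv
    dsimp only
    rw [abs_neg, abs_of_pos hv, smul_eq_mul, Complex.ofReal_exp, ← Complex.exp_add]
    congr 1
    push_cast
    ring
  rw [hIic, hIoi]
  have h1 : (1 + (2*π*ξ)*Complex.I) ≠ 0 := by
    intro h
    have := congrArg Complex.re h
    simp at this
  have h2 : (1 - (2*π*ξ)*Complex.I) ≠ 0 := by
    intro h
    have := congrArg Complex.re h
    simp at this
  have key : (1 + (2*π*ξ)*Complex.I) * (1 - (2*π*ξ)*Complex.I)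
      = ((1 + (2*π*ξ)^2 : ℝ) : ℂ) := by
    have : Complex.I * Complex.I = -1 := Complex.I_mul_I
    push_cast
    ring_nf
    rw [Complex.I_sq]
    ring
  rw [Complex.ofReal_div, ← key]
  push_cast
  field_simp
  ring

lemma key0 (t : ℝ) :
    ∫ x : ℝ, Complex.exp (((x*t : ℝ) : ℂ) * Complex.I) * (((x:ℂ))^2+1)⁻¹
      = (π : ℂ) * Real.exp (-|t|) := by
  set g : ℝ → ℂ := fun x => (Real.exp (-|x|) : ℂ) with hg
  have hg_cont : Continuous g :=
    Complex.continuous_ofReal.comp (Real.continuous_exp.comp _root_.continuous_abs.neg)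
  have hg_int : Integrable g := integrable_exp_neg_abs'.ofReal
  have hF : 𝓕 g = fun ξ : ℝ => ((2 / (1 + (2*π*ξ)^2) : ℝ) : ℂ) := funext four_exp_abs
  have hFi : Integrable (𝓕 g) := by
    rw [hF]
    apply Integrable.ofReal
    have h2 : Integrable (fun y : ℝ => 2 * (1 + y^2)⁻¹) := integrable_inv_one_add_sq.const_mul 2
    have heq : (fun ξ : ℝ => (2 / (1 + (2*π*ξ)^2) : ℝ))
        = fun ξ : ℝ => (fun y : ℝ => 2*(1+y^2)⁻¹) (2*π*ξ) := by
      funext ξ; simp [div_eq_mul_inv]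
    have h3 := h2.comp_mul_left' (R := 2*π) (by positivity)
    exact h3.congr (Filter.Eventually.of_forall fun ξ => rfl)
  have hinv := hg_cont.fourierInv_fourier_eq hg_int hFi
  set Φ : ℝ → ℂ := fun y => Complex.exp (↑(y*t) * Complex.I) * ((2 / (1 + y^2) : ℝ) : ℂ) with hΦ
  have hval : g t = |(2*π)⁻¹| • ∫ y : ℝ, Φ y := by
    conv_lhs => rw [← hinv]
    rw [Real.fourierInv_eq_fourier_neg,
      Real.fourier_real_eq_integral_exp_smul, hF]
    rw [← MeasureTheory.Measure.integral_comp_mul_left Φ (2*π)]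
    congr 1
    funext ξ
    rw [smul_eq_mul]
    simp only [hΦ]
    congr 2
    push_cast
    ring
  have hΦint : ∫ y : ℝ, Φ y
      = 2 * ∫ x : ℝ, Complex.exp (((x*t : ℝ) : ℂ) * Complex.I) * (((x:ℂ))^2+1)⁻¹ := by
    rw [← integral_const_mul]
    congr 1
    funext y
    simp only [hΦ]
    have h0 : ((y:ℂ)^2 + 1) ≠ 0 := by
      intro h
      have : (0:ℝ) < y^2 + 1 := by positivity
      exact this.ne' (by exact_mod_cast congrArg Complex.re h)
    rw [Complex.ofReal_div]
    push_cast
    rw [div_eq_mul_inv]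
    rw [show (1 : ℂ) + (y:ℂ)^2 = (y:ℂ)^2 + 1 by ring]
    ring
  rw [hΦint] at hval
  have h2π : |(2*π)⁻¹| = (2*π)⁻¹ := abs_of_pos (by positivity)
  rw [h2π, Complex.real_smul] at hval
  set Aint := ∫ x : ℝ, Complex.exp (((x*t : ℝ) : ℂ) * Complex.I) * (((x:ℂ))^2+1)⁻¹ with hA
  simp only [hg] at hval
  push_cast at hval
  have hc : ((2*(π:ℂ))⁻¹) * 2 * (π:ℂ) = 1 := by
    have hπ : (π:ℂ) ≠ 0 := Complex.ofReal_ne_zero.mpr Real.pi_ne_zero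
    field_simp
  push_cast
  linear_combination (-Aint) * hc - (π:ℂ) * hval

lemma key_integral (t : ℝ) :
    ∫ x : ℝ, Complex.exp (-Complex.I * t * x) * (((x:ℂ))^2+1)⁻¹
      = (π : ℂ) * Real.exp (-|t|) := by
  have := key0 (-t)
  rw [abs_neg] at this
  rw [← this]
  congr 1
  funext x
  congr 1
  push_cast
  ring

end auxScalar

open MeasureTheory ContinuousLinearMap
open scoped InnerProductSpace
open scoped ENNReal

/-- Let `α_∞ ≥ 0` be bounded on `H₀`, `H₁ = L²(ℝ, H₀)`, `Ω₁`
multiplication by the independent variable, and `S : H₁ → H₀` the bounded operator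
`Sψ = (1/√π) ∫ (x+i)⁻¹ √α_∞ ψ(x) dx`.  Then `S e^{-itΩ₁} S† = e^{-|t|} α_∞` for all `t`,
where `e^{-itΩ₁}` is multiplication by `e^{-itx}`. -/
theorem instantaneous_friction_model
    {H₀ : Type*} [NormedAddCommGroup H₀] [InnerProductSpace ℂ H₀] [CompleteSpace H₀]
    (α sqrtα : H₀ →L[ℂ] H₀) (hα : α.IsPositive)
    (hsqrtα : sqrtα.IsPositive) (hsq : sqrtα ∘L sqrtα = α)
    (S : Lp H₀ 2 (volume : Measure ℝ) →L[ℂ] H₀)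
    (hS : ∀ ψ : Lp H₀ 2 (volume : Measure ℝ),
      S ψ = ((Real.sqrt Real.pi : ℂ))⁻¹ •
        ∫ x : ℝ, (((x : ℂ) + Complex.I)⁻¹) • sqrtα (ψ x))
    (U : ℝ → (Lp H₀ 2 (volume : Measure ℝ) →L[ℂ] Lp H₀ 2 (volume : Measure ℝ)))
    (hU : ∀ (t : ℝ) (ψ : Lp H₀ 2 (volume : Measure ℝ)),
      (U t ψ : ℝ → H₀) =ᵐ[volume]
        fun x : ℝ => Complex.exp (-Complex.I * t * x) • (ψ x)) :
    ∀ t : ℝ, S ∘L U t ∘L adjoint S = Real.exp (-|t|) • α := by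
  intro t
  set κ : ℂ := ((Real.sqrt Real.pi : ℂ))⁻¹ with hκ
  have hsa : ContinuousLinearMap.adjoint sqrtα = sqrtα :=
    ContinuousLinearMap.isSelfAdjoint_iff'.mp hsqrtα.isSelfAdjoint
  have hswap : ∀ (w v : H₀), ⟪sqrtα w, v⟫_ℂ = ⟪w, sqrtα v⟫_ℂ := by
    intro w v
    conv_lhs => rw [← hsa]
    exact ContinuousLinearMap.adjoint_inner_left sqrtα v w
  -- membership facts
  have hpnz : ∀ x : ℝ, ((x:ℂ) + Complex.I) ≠ 0 := by
    intro x h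
    have := congrArg Complex.im h
    simp at this
  have hmnz : ∀ x : ℝ, ((x:ℂ) - Complex.I) ≠ 0 := by
    intro x h
    have := congrArg Complex.im h
    simp at this
  have hmem_plus : MemLp (fun x : ℝ => ((x:ℂ) + Complex.I)⁻¹) 2 (volume : Measure ℝ) := by
    have hcont : Continuous fun x : ℝ => ((x:ℂ) + Complex.I)⁻¹ :=
      Continuous.inv₀ (by fun_prop) hpnz
    rw [memLp_two_iff_integrable_sq_norm hcont.aestronglyMeasurable]
    refine integrable_inv_one_add_sq.congr ?_
    refine Filter.Eventually.of_forall fun x => ?_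
    show (1 + x ^ 2)⁻¹ = ‖((x:ℂ) + Complex.I)⁻¹‖ ^ 2
    rw [norm_inv, inv_pow, Complex.sq_norm]
    congr 1
    simp [Complex.normSq_apply]
    ring
  have hmem_minus : MemLp (fun x : ℝ => ((x:ℂ) - Complex.I)⁻¹) 2 (volume : Measure ℝ) := by
    have hcont : Continuous fun x : ℝ => ((x:ℂ) - Complex.I)⁻¹ :=
      Continuous.inv₀ (by fun_prop) hmnz
    rw [memLp_two_iff_integrable_sq_norm hcont.aestronglyMeasurable]
    refine integrable_inv_one_add_sq.congr ?_
    refine Filter.Eventually.of_forall fun x => ?_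
    show (1 + x ^ 2)⁻¹ = ‖((x:ℂ) - Complex.I)⁻¹‖ ^ 2
    rw [norm_inv, inv_pow, Complex.sq_norm]
    congr 1
    simp [Complex.normSq_apply]
    ring
  have hmemS : ∀ ψ : Lp H₀ 2 (volume : Measure ℝ),
      MemLp (fun x : ℝ => sqrtα (ψ x)) 2 (volume : Measure ℝ) := fun ψ =>
    ContinuousLinearMap.comp_memLp' sqrtα (Lp.memLp ψ)
  have hone : (1 : ℝ≥0∞) / 1 = 1 / 2 + 1 / 2 := by
    rw [ENNReal.add_halves, div_one]
  have hint : ∀ ψ : Lp H₀ 2 (volume : Measure ℝ),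
      Integrable (fun x : ℝ => ((x:ℂ) + Complex.I)⁻¹ • sqrtα (ψ x)) volume := by
    intro ψ
    rw [← memLp_one_iff_integrable]
    exact MemLp.smul (r := 1) (hmemS ψ) hmem_plus
  -- the candidate adjoint
  have hgmem : ∀ v : H₀,
      MemLp (fun x : ℝ => κ • (((x:ℂ) - Complex.I)⁻¹ • sqrtα v)) 2 (volume : Measure ℝ) := by
    intro v
    have h2 : (2 : ℝ≥0∞) ≠ 0 := by norm_num
    have := MemLp.smul (p := 2) (r := 2) (memLp_top_const (μ := (volume : Measure ℝ)) (sqrtα v))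
      hmem_minus
    exact this.const_smul κ
  set G : H₀ → Lp H₀ 2 (volume : Measure ℝ) := fun v => (hgmem v).toLp _ with hG
  have hGcoe : ∀ v : H₀, (G v : ℝ → H₀) =ᵐ[volume]
      fun x : ℝ => κ • (((x:ℂ) - Complex.I)⁻¹ • sqrtα v) := fun v => (hgmem v).coeFn_toLp
  have hadj : ∀ v : H₀, adjoint S v = G v := by
    intro v
    refine ext_inner_left ℂ fun φ => ?_
    rw [ContinuousLinearMap.adjoint_inner_right, hS φ, inner_smul_left]
    have h1 : ⟪∫ x : ℝ, ((x:ℂ) + Complex.I)⁻¹ • sqrtα (φ x), v⟫_ℂ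
        = ∫ x : ℝ, ⟪((x:ℂ) + Complex.I)⁻¹ • sqrtα (φ x), v⟫_ℂ := by
      rw [← inner_conj_symm, ← integral_inner (hint φ) v, ← integral_conj]
      congr 1
      funext x
      rw [inner_conj_symm]
    rw [h1, MeasureTheory.L2.inner_def, ← integral_const_mul]
    have h2 : ∀ᵐ x : ℝ ∂(volume : Measure ℝ), (G v : ℝ → H₀) x
        = κ • (((x:ℂ) - Complex.I)⁻¹ • sqrtα v) := hGcoe v
    apply integral_congr_ae
    filter_upwards [h2] with x hx
    rw [hx, inner_smul_left, inner_smul_right, inner_smul_right, hswap]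
    simp only [hκ, map_inv₀, map_add, Complex.conj_ofReal, Complex.conj_I, map_sub]
    ring
  -- final computation
  ext v
  simp only [ContinuousLinearMap.comp_apply, ContinuousLinearMap.smul_apply]
  rw [hadj v, hS]
  have hαv : sqrtα (sqrtα v) = α v := by rw [← hsq]; rfl
  have hInt_eq : ∫ x : ℝ, ((x:ℂ) + Complex.I)⁻¹ • sqrtα ((U t (G v)) x)
      = ∫ x : ℝ, (Complex.exp (-Complex.I * t * x) * (((x:ℂ)^2 + 1)⁻¹)) • (κ • α v) := by
    apply integral_congr_ae
    filter_upwards [hU t (G v), hGcoe v] with x hx1 hx2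
    rw [hx1, hx2]
    rw [sqrtα.map_smul, sqrtα.map_smul, sqrtα.map_smul, hαv]
    rw [smul_smul, smul_smul, smul_smul, smul_smul]
    congr 1
    have hxx : ((x:ℂ) + Complex.I)⁻¹ * ((x:ℂ) - Complex.I)⁻¹ = ((x:ℂ)^2 + 1)⁻¹ := by
      rw [← mul_inv]
      congr 1
      have : Complex.I * Complex.I = -1 := Complex.I_mul_I
      ring_nf
      rw [Complex.I_sq]
      ring
    linear_combination (Complex.exp (-Complex.I * t * x) * κ) * hxx
  rw [hInt_eq, integral_smul_const, key_integral t]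
  have hπpos : (0:ℝ) < Real.pi := Real.pi_pos
  have hκ2 : κ * κ = ((Real.pi : ℝ) : ℂ)⁻¹ := by
    rw [hκ, ← mul_inv]
    congr 1
    rw [← Complex.ofReal_mul, Real.mul_self_sqrt hπpos.le]
  have hreal : Real.exp (-|t|) • α v = ((Real.exp (-|t|) : ℝ) : ℂ) • α v := by
    rw [RCLike.real_smul_eq_coe_smul (K := ℂ)]
    norm_cast
  rw [hreal]
  rw [smul_smul, smul_smul]
  congr 1
  have hπnz : ((Real.pi : ℝ) : ℂ) ≠ 0 := by
    exact_mod_cast Complex.ofReal_ne_zero.mpr hπpos.ne'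
  have hπinv : ((Real.pi : ℝ) : ℂ) * ((Real.pi : ℝ) : ℂ)⁻¹ = 1 := mul_inv_cancel₀ hπnz
  linear_combination (((Real.pi : ℝ) : ℂ) * ((Real.exp (-|t|) : ℝ) : ℂ)) * hκ2
    + ((Real.exp (-|t|) : ℝ) : ℂ) * hπinv
end

section
/- (Stieltjes inversion, weak form) Let N be a finite non-negative Borel measure on ℝ and g(ζ) = ∫ dN(σ)/(σ − ζ). Then for every continuous compactly supported f : ℝ → ℝ, lim_{η→0⁺} (1/π) ∫_{-∞}^∞ f(σ) Im g(σ + iη) dσ = ∫ f dN. -/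
open MeasureTheory Filter
open scoped Topology

section aux

variable {N : Measure ℝ} [IsFiniteMeasure N] {f : ℝ → ℝ}

lemma si_ker_im (σ σ' η : ℝ) :
    (((σ' : ℂ) - ((σ : ℂ) + (η : ℂ) * Complex.I))⁻¹).im
      = η / ((σ' - σ) ^ 2 + η ^ 2) := by
  rw [Complex.inv_im]
  simp [Complex.normSq_apply]
  ring

lemma si_ker_ne (σ σ' η : ℝ) (hη : 0 < η) :
    (σ' : ℂ) - ((σ : ℂ) + (η : ℂ) * Complex.I) ≠ 0 := by
  intro h
  have := congrArg Complex.im h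
  simp at this
  exact hη.ne' this

lemma si_int (σ η : ℝ) (hη : 0 < η) :
    Integrable (fun σ' : ℝ => ((σ' : ℂ) - ((σ : ℂ) + (η : ℂ) * Complex.I))⁻¹) N := by
  refine Integrable.mono' (integrable_const (η⁻¹)) ?_ ?_
  · exact ((Complex.continuous_ofReal.sub continuous_const).inv₀
      (fun σ' => si_ker_ne σ σ' η hη)).aestronglyMeasurable
  · refine Filter.Eventually.of_forall fun σ' => ?_
    rw [norm_inv]
    have h1 : η ≤ ‖(σ' : ℂ) - ((σ : ℂ) + (η : ℂ) * Complex.I)‖ := by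
      have h := Complex.abs_im_le_norm ((σ' : ℂ) - ((σ : ℂ) + (η : ℂ) * Complex.I))
      have him : ((σ' : ℂ) - ((σ : ℂ) + (η : ℂ) * Complex.I)).im = -η := by simp
      rw [him, abs_neg] at h
      exact (le_abs_self η).trans h
    exact inv_anti₀ hη h1

lemma si_im_g (g : ℂ → ℂ) (hg : ∀ ζ : ℂ, g ζ = ∫ σ : ℝ, ((σ : ℂ) - ζ)⁻¹ ∂N)
    (σ η : ℝ) (hη : 0 < η) :
    (g ((σ : ℂ) + (η : ℂ) * Complex.I)).im
      = ∫ σ' : ℝ, η / ((σ' - σ) ^ 2 + η ^ 2) ∂N := by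
  rw [hg]
  rw [show (∫ σ' : ℝ, ((σ' : ℂ) - ((σ : ℂ) + (η : ℂ) * Complex.I))⁻¹ ∂N).im
      = ∫ σ' : ℝ, (((σ' : ℂ) - ((σ : ℂ) + (η : ℂ) * Complex.I))⁻¹).im ∂N from
    (integral_im (si_int σ η hη)).symm]
  exact integral_congr_ae (Filter.Eventually.of_forall fun σ' => si_ker_im σ σ' η)

lemma si_change (σ' η : ℝ) (hη : 0 < η) :
    ∫ σ : ℝ, f σ * (η / ((σ' - σ) ^ 2 + η ^ 2))
      = ∫ t : ℝ, f (σ' + η * t) * (1 + t ^ 2)⁻¹ := by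
  set F : ℝ → ℝ := fun σ => f σ * (η / ((σ' - σ) ^ 2 + η ^ 2)) with hF
  have h1 : (∫ t : ℝ, F (σ' + η * t)) = |η⁻¹| • ∫ x : ℝ, F x := by
    rw [MeasureTheory.Measure.integral_comp_mul_left (fun x => F (σ' + x)) η,
      integral_add_left_eq_self]
  have h2 : ∀ t : ℝ, F (σ' + η * t) = η⁻¹ * (f (σ' + η * t) * (1 + t ^ 2)⁻¹) := by
    intro t
    have hd : (σ' - (σ' + η * t)) ^ 2 + η ^ 2 = η ^ 2 * (1 + t ^ 2) := by ring
    rw [hF]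
    simp only [hd]
    have hη' : η ≠ 0 := hη.ne'
    have ht : (1 : ℝ) + t ^ 2 ≠ 0 := by positivity
    field_simp
  have h3 : (∫ t : ℝ, F (σ' + η * t)) = η⁻¹ * ∫ t : ℝ, f (σ' + η * t) * (1 + t ^ 2)⁻¹ := by
    simp_rw [h2]
    exact integral_const_mul _ _
  have h4 : (∫ x : ℝ, F x) = |η| • (∫ t : ℝ, F (σ' + η * t)) := by
    rw [h1, smul_smul]
    rw [abs_inv, mul_inv_cancel₀ (by positivity), one_smul]
  rw [show (∫ σ : ℝ, f σ * (η / ((σ' - σ) ^ 2 + η ^ 2))) = ∫ x : ℝ, F x from rfl, h4, h3,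
    abs_of_pos hη, smul_eq_mul, ← mul_assoc, mul_inv_cancel₀ hη.ne', one_mul]

end aux

/-- (Stieltjes inversion, weak form.) For a finite non-negative Borel
measure `N` on `ℝ` and `g(ζ) = ∫ (σ − ζ)⁻¹ dN(σ)`, for every continuous compactly
supported `f : ℝ → ℝ`,
`lim_{η→0⁺} (1/π) ∫ f(σ) Im g(σ+iη) dσ = ∫ f dN`. -/
theorem stieltjes_inversion_weak
    (N : Measure ℝ) [IsFiniteMeasure N]
    (g : ℂ → ℂ) (hg : ∀ ζ : ℂ, g ζ = ∫ σ : ℝ, ((σ : ℂ) - ζ)⁻¹ ∂N)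
    (f : ℝ → ℝ) (hf : Continuous f) (hfc : HasCompactSupport f) :
    Tendsto
      (fun η : ℝ => (1 / Real.pi) *
        ∫ σ : ℝ, f σ * (g ((σ : ℂ) + (η : ℂ) * Complex.I)).im)
      (nhdsWithin 0 (Set.Ioi 0))
      (𝓝 (∫ σ : ℝ, f σ ∂N)) := by
  obtain ⟨C, hC⟩ := hfc.exists_bound_of_continuous hf
  have hC0 : 0 ≤ C := le_trans (norm_nonneg _) (hC 0)
  set h : ℝ → ℝ → ℝ := fun η σ' => ∫ t : ℝ, f (σ' + η * t) * (1 + t ^ 2)⁻¹ with hh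
  have hbound_int : Integrable (fun t : ℝ => C * (1 + t ^ 2)⁻¹) :=
    integrable_inv_one_add_sq.const_mul C
  have hslice_bd : ∀ (η σ' t : ℝ), ‖f (σ' + η * t) * (1 + t ^ 2)⁻¹‖ ≤ C * (1 + t ^ 2)⁻¹ := by
    intro η σ' t
    rw [norm_mul]
    have h1 : (0:ℝ) < 1 + t ^ 2 := by positivity
    have h2 : ‖(1 + t ^ 2)⁻¹‖ = (1 + t ^ 2)⁻¹ := by
      rw [Real.norm_eq_abs, abs_of_pos (by positivity)]
    rw [h2]
    exact mul_le_mul_of_nonneg_right (hC _) (by positivity)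
  have hcont_inv : Continuous fun t : ℝ => (1 + t ^ 2)⁻¹ :=
    (continuous_const.add (continuous_pow 2)).inv₀ fun t => (by positivity : (0:ℝ) < 1 + t ^ 2).ne'
  have hslice_cont : ∀ η σ' : ℝ, Continuous fun t : ℝ => f (σ' + η * t) * (1 + t ^ 2)⁻¹ := by
    intro η σ'
    have h1 : Continuous fun t : ℝ => σ' + η * t := by continuity
    exact (hf.comp h1).mul hcont_inv
  -- continuity of h η
  have h_cont : ∀ η : ℝ, Continuous (h η) := by
    intro η
    refine continuous_of_dominated (fun σ' => (hslice_cont η σ').aestronglyMeasurable)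
      (fun σ' => Filter.Eventually.of_forall (hslice_bd η σ')) hbound_int
      (Filter.Eventually.of_forall fun t => ?_)
    have h1 : Continuous fun σ' : ℝ => σ' + η * t := by continuity
    exact (hf.comp h1).mul continuous_const
  -- pointwise convergence of h η σ' to π * f σ'
  have h_ptw : ∀ σ' : ℝ, Tendsto (fun η => h η σ') (nhdsWithin 0 (Set.Ioi 0))
      (𝓝 (Real.pi * f σ')) := by
    intro σ'
    have hlim : (∫ t : ℝ, f σ' * (1 + t ^ 2)⁻¹) = Real.pi * f σ' := by
      rw [integral_const_mul, integral_univ_inv_one_add_sq, mul_comm]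
    rw [← hlim]
    refine tendsto_integral_filter_of_dominated_convergence (fun t => C * (1 + t ^ 2)⁻¹)
      (Filter.Eventually.of_forall fun η => ?_)
      (Filter.Eventually.of_forall fun η => Filter.Eventually.of_forall (hslice_bd η σ'))
      hbound_int (Filter.Eventually.of_forall fun t => ?_)
    · exact (hslice_cont η σ').aestronglyMeasurable
    · have h1 : Tendsto (fun η : ℝ => σ' + η * t) (nhdsWithin 0 (Set.Ioi 0)) (𝓝 σ') := by
        have : Tendsto (fun η : ℝ => σ' + η * t) (𝓝 0) (𝓝 (σ' + 0 * t)) :=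
          (continuous_const.add (continuous_id.mul continuous_const)).tendsto 0
        simpa using this.mono_left nhdsWithin_le_nhds
      exact ((hf.tendsto σ').comp h1).mul_const _
  -- main rewriting for η > 0
  have h_eq : ∀ η : ℝ, 0 < η →
      (1 / Real.pi) * (∫ σ : ℝ, f σ * (g ((σ : ℂ) + (η : ℂ) * Complex.I)).im)
        = (1 / Real.pi) * ∫ σ' : ℝ, h η σ' ∂N := by
    intro η hη
    congr 1
    have step1 : (∫ σ : ℝ, f σ * (g ((σ : ℂ) + (η : ℂ) * Complex.I)).im)
        = ∫ σ : ℝ, ∫ σ' : ℝ, f σ * (η / ((σ' - σ) ^ 2 + η ^ 2)) ∂N := by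
      refine integral_congr_ae (Filter.Eventually.of_forall fun σ => ?_)
      show f σ * (g ((σ : ℂ) + (η : ℂ) * Complex.I)).im
        = ∫ σ' : ℝ, f σ * (η / ((σ' - σ) ^ 2 + η ^ 2)) ∂N
      rw [si_im_g g hg σ η hη, ← integral_const_mul]
    -- Fubini
    have hint : Integrable (Function.uncurry fun σ σ' : ℝ =>
        f σ * (η / ((σ' - σ) ^ 2 + η ^ 2))) (volume.prod N) := by
      have hmeas : Continuous (Function.uncurry fun σ σ' : ℝ =>
          f σ * (η / ((σ' - σ) ^ 2 + η ^ 2))) := by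
        apply (hf.comp continuous_fst).mul
        apply continuous_const.div
        · fun_prop
        · intro p
          positivity
      refine Integrable.mono' ((hf.integrable_of_hasCompactSupport hfc).norm.mul_prod
        (integrable_const (η⁻¹))) hmeas.aestronglyMeasurable ?_
      refine Filter.Eventually.of_forall fun p => ?_
      have hk : η / ((p.2 - p.1) ^ 2 + η ^ 2) ≤ η⁻¹ := by
        rw [div_le_iff₀ (by positivity), inv_mul_eq_div, le_div_iff₀ hη]
        nlinarith [sq_nonneg (p.2 - p.1)]
      have hk0 : 0 ≤ η / ((p.2 - p.1) ^ 2 + η ^ 2) := by positivity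
      calc ‖f p.1 * (η / ((p.2 - p.1) ^ 2 + η ^ 2))‖
          = ‖f p.1‖ * (η / ((p.2 - p.1) ^ 2 + η ^ 2)) := by
            rw [norm_mul, Real.norm_eq_abs (η / _), abs_of_nonneg hk0]
        _ ≤ ‖f p.1‖ * η⁻¹ := mul_le_mul_of_nonneg_left hk (norm_nonneg _)
    rw [step1, integral_integral_swap hint]
    refine integral_congr_ae (Filter.Eventually.of_forall fun σ' => ?_)
    exact si_change σ' η hη
  -- conclude
  have h_main : Tendsto (fun η : ℝ => ∫ σ' : ℝ, h η σ' ∂N) (nhdsWithin 0 (Set.Ioi 0))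
      (𝓝 (∫ σ' : ℝ, Real.pi * f σ' ∂N)) := by
    refine tendsto_integral_filter_of_dominated_convergence (fun _ => C * Real.pi)
      (Filter.Eventually.of_forall fun η => ((h_cont η).aestronglyMeasurable))
      (Filter.Eventually.of_forall fun η => Filter.Eventually.of_forall fun σ' => ?_)
      (integrable_const _) (Filter.Eventually.of_forall fun σ' => h_ptw σ')
    calc ‖h η σ'‖ ≤ ∫ t : ℝ, C * (1 + t ^ 2)⁻¹ :=
          norm_integral_le_of_norm_le hbound_int
            (Filter.Eventually.of_forall (hslice_bd η σ'))
      _ = C * Real.pi := by rw [integral_const_mul, integral_univ_inv_one_add_sq]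
  have h_final : Tendsto (fun η : ℝ => (1 / Real.pi) * ∫ σ' : ℝ, h η σ' ∂N)
      (nhdsWithin 0 (Set.Ioi 0)) (𝓝 (∫ σ : ℝ, f σ ∂N)) := by
    have := h_main.const_mul (1 / Real.pi)
    have heq : (1 / Real.pi) * (∫ σ' : ℝ, Real.pi * f σ' ∂N) = ∫ σ : ℝ, f σ ∂N := by
      rw [integral_const_mul, ← mul_assoc, one_div, inv_mul_cancel₀ Real.pi_ne_zero, one_mul]
    rwa [heq] at this
  refine h_final.congr' ?_
  filter_upwards [self_mem_nhdsWithin] with η hη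
  exact (h_eq η hη).symm
end
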